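/- Expected queue length formula: if N has the pmf p(n) = C(n-m, ℓ-m) * C(2R+m-n, 2t+m-ℓ) / C(2R+1, 2t+1) on n ∈ {ℓ, ..., 2R-2t+ℓ}, then E[N] = ∑ n·p(n) = ℓ + (ℓ - m + 1)(R - t)/(t + 1). -/

import Mathlib

open Finset PowerSeries

lemma conv_choose (a b K : ℕ) :
    ∑ k ∈ Finset.range (K+1), (a+k).choose a * (b+(K-k)).choose b
      = (a+b+1+K).choose (a+b+1) := by
  have h : ((mk 1 : ℤ⟦X⟧) ^ (a+1)) * ((mk 1 : ℤ⟦X⟧) ^ (b+1))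
      = (mk 1 : ℤ⟦X⟧) ^ ((a+b+1)+1) := by
    rw [← pow_add]; ring_nf
  rw [mk_one_pow_eq_mk_choose_add, mk_one_pow_eq_mk_choose_add,
    mk_one_pow_eq_mk_choose_add] at h
  have h2 := congrArg (PowerSeries.coeff K) h
  rw [PowerSeries.coeff_mul] at h2
  simp only [PowerSeries.coeff_mk] at h2
  rw [Finset.Nat.sum_antidiagonal_eq_sum_range_succ_mk] at h2
  exact_mod_cast h2

theorem stmt_9 (m ℓ t R : ℕ) (hm : m ≤ ℓ) (hℓ : ℓ - m ≤ 2*t) (ht : t ≤ R) :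
    ∑ n ∈ Finset.Icc ℓ (2*R - 2*t + ℓ),
      (n : ℚ) * (((n - m).choose (ℓ - m) * (2*R + m - n).choose (2*t + m - ℓ) : ℚ)
                  / ((2*R + 1).choose (2*t + 1) : ℚ))
      = (ℓ : ℚ) + ((ℓ : ℚ) - (m : ℚ) + 1) * ((R : ℚ) - (t : ℚ)) / ((t : ℚ) + 1) := by
  set a := ℓ - m with ha
  set b := 2*t - (ℓ - m) with hb
  set K := 2*R - 2*t with hK
  set D := (2*R + 1).choose (2*t + 1) with hD
  have hDpos : 0 < D := Nat.choose_pos (by omega)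
  have hDQ : (D : ℚ) ≠ 0 := by positivity
  -- reindex
  have hIcc : Finset.Icc 0 K = Finset.range (K+1) := by ext x; simp
  have hmap : Finset.Icc ℓ (ℓ+K) = (Finset.range (K+1)).map (addLeftEmbedding ℓ) := by
    rw [← hIcc, Finset.map_add_left_Icc]; simp
  rw [show 2*R - 2*t + ℓ = ℓ + K by omega, hmap, Finset.sum_map]
  simp only [addLeftEmbedding_apply]
  have hterm : ∀ k ∈ Finset.range (K+1),
      ((ℓ + k : ℕ) : ℚ) * ((((ℓ + k) - m).choose (ℓ - m) * (2*R + m - (ℓ + k)).choose (2*t + m - ℓ) : ℚ)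
                  / (D : ℚ))
      = ((ℓ : ℚ) + k) * (((a+k).choose a * (b+(K-k)).choose b : ℕ) : ℚ) / (D : ℚ) := by
    intro k hk
    simp only [Finset.mem_range] at hk
    have h1 : (ℓ + k) - m = a + k := by omega
    have h2 : 2*R + m - (ℓ + k) = b + (K - k) := by omega
    have h3 : 2*t + m - ℓ = b := by omega
    rw [h1, h2, h3]
    push_cast
    ring
  rw [Finset.sum_congr rfl hterm]
  -- the two convolution sums
  have hS0 : ∑ k ∈ Finset.range (K+1), (a+k).choose a * (b+(K-k)).choose b = D := by
    rw [conv_choose]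
    congr 1 <;> omega
  have hS1 : ∑ k ∈ Finset.range (K+1), (a+1+k).choose (a+1) * (b+(K-k)).choose b
      = (2*R+2).choose (2*t+2) := by
    rw [conv_choose]
    congr 1 <;> omega
  -- pointwise: k * N k = (a+1) * M k - (a+1) * N k
  have hpt : ∀ k ∈ Finset.range (K+1),
      ((ℓ : ℚ) + k) * (((a+k).choose a * (b+(K-k)).choose b : ℕ) : ℚ) / (D : ℚ)
      = ((ℓ : ℚ) - (a+1)) * (((a+k).choose a * (b+(K-k)).choose b : ℕ) : ℚ) / D
        + ((a : ℚ)+1) * (((a+1+k).choose (a+1) * (b+(K-k)).choose b : ℕ) : ℚ) / D := by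
    intro k _
    have hkey : (a + k + 1) * (a+k).choose a = (a+1+k).choose (a+1) * (a+1) := by
      have := Nat.add_one_mul_choose_eq (a+k) a
      simpa [Nat.succ_eq_add_one, Nat.add_right_comm] using this
    have hkeyQ : ((a:ℚ) + k + 1) * ((a+k).choose a : ℚ) = ((a+1+k).choose (a+1) : ℚ) * ((a:ℚ)+1) := by
      exact_mod_cast hkey
    rw [← add_div]
    rw [div_eq_div_iff hDQ hDQ]
    push_cast
    linear_combination ((b+(K-k)).choose b : ℚ) * (D : ℚ) * hkeyQ
  rw [Finset.sum_congr rfl hpt, Finset.sum_add_distrib]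
  rw [← Finset.sum_div, ← Finset.sum_div, ← Finset.mul_sum, ← Finset.mul_sum,
    ← Nat.cast_sum, ← Nat.cast_sum, hS0, hS1]
  -- final algebra
  have hkey2 : (2*t+2) * (2*R+2).choose (2*t+2) = (2*R+2) * D := by
    have := Nat.add_one_mul_choose_eq (2*R+1) (2*t+1)
    rw [show 2*R+1+1 = 2*R+2 by omega, show 2*t+1+1 = 2*t+2 by omega] at this
    rw [this]; ring
  have hkey2Q : ((2:ℚ)*t+2) * ((2*R+2).choose (2*t+2) : ℚ) = ((2:ℚ)*R+2) * D := by
    exact_mod_cast hkey2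
  have haQ : (a : ℚ) = (ℓ : ℚ) - m := by
    rw [ha]; push_cast [hm]; ring
  rw [haQ]
  have ht1 : ((t:ℚ)+1) ≠ 0 := by positivity
  field_simp
  nlinarith [hkey2Q, hDQ]
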